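/- Let X = ℝ^d with d ≥ 2, let p₁, …, pₙ ∈ X with n ≥ 1, let γ₁, …, γₙ be gauges on X, let f(x) = Σᵢ₌₁ⁿ γᵢ(pᵢ − x), and let α ∈ ℝ. Then every point x₀ in the (d−2)-skeleton ext_{d−2}(f_{≤α}) of the sublevel set f_{≤α} = {x ∈ X : f(x) ≤ α} can be expressed as x₀ = pᵢ + λw with suitable i ∈ {1, …, n}, a real number λ ∈ [0, α], and a point w ∈ ext_{d−2}(−B_{γᵢ}), where B_{γᵢ} = {z ∈ X : γᵢ(z) ≤ 1} is the unit ball of γᵢ. -/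

import Mathlib

open scoped Pointwise

/-- A gauge on a real vector space: nonnegative, definite at `0`, positively homogeneous,
and subadditive. -/
def IsGauge {X : Type*} [AddCommGroup X] [Module ℝ X] (γ : X → ℝ) : Prop :=
  (∀ x, 0 ≤ γ x) ∧ (∀ x : X, γ x = 0 → x = 0) ∧
    (∀ (l : ℝ) (x : X), 0 ≤ l → γ (l • x) = l * γ x) ∧
    ∀ x y, γ (x + y) ≤ γ x + γ y

/-- `F` is a face of the closed convex set `K`: a convex subset of `K` such that whenever a
relative interior point of a segment `[x,y] ⊆ K` lies in `F`, the whole segment lies in `F`. -/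
def IsFaceOf {X : Type*} [AddCommGroup X] [Module ℝ X] (K F : Set X) : Prop :=
  F ⊆ K ∧ Convex ℝ F ∧
    ∀ x ∈ K, ∀ y ∈ K, (openSegment ℝ x y ∩ F).Nonempty → segment ℝ x y ⊆ F

/-- The affine dimension of a set: the dimension of the direction of its affine span. -/
noncomputable def affDim {X : Type*} [AddCommGroup X] [Module ℝ X] (A : Set X) : ℕ :=
  Module.finrank ℝ (affineSpan ℝ A).direction

/-- The `k`-skeleton of `K`: the set of `k`-extreme points, i.e. the points lying in the
relative interior of a face of `K` of affine dimension at most `k`. -/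
def kSkeleton {X : Type*} [NormedAddCommGroup X] [NormedSpace ℝ X]
    (k : ℕ) (K : Set X) : Set X :=
  {x : X | x ∈ K ∧ ∃ F : Set X, IsFaceOf K F ∧ x ∈ intrinsicInterior ℝ F ∧ affDim F ≤ k}



set_option synthInstance.maxHeartbeats 1000000
set_option maxHeartbeats 2000000

open AffineSubspace Set

section Helpers

variable {E : Type*} [NormedAddCommGroup E] [NormedSpace ℝ E]

lemma mem_intrinsicInterior_iff' {s : Set E} {w : E} :
    w ∈ intrinsicInterior ℝ s ↔ w ∈ s ∧ ∃ δ > 0,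
      ∀ v ∈ (affineSpan ℝ s).direction, ‖v‖ < δ → w + v ∈ s := by
  constructor
  · rintro hw
    obtain ⟨y, hy, rfl⟩ := mem_intrinsicInterior.1 hw
    refine ⟨(interior_subset hy : y ∈ Subtype.val ⁻¹' s), ?_⟩
    rw [mem_interior_iff_mem_nhds, Metric.mem_nhds_iff] at hy
    obtain ⟨ε, hε, hball⟩ := hy
    refine ⟨ε, hε, fun v hv hnv => ?_⟩
    have hmem : (y : E) + v ∈ affineSpan ℝ s := by
      have := AffineSubspace.vadd_mem_of_mem_direction hv y.2
      simpa [vadd_eq_add, add_comm] using this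
    have : (⟨(y : E) + v, hmem⟩ : affineSpan ℝ s) ∈ Metric.ball y ε := by
      simp [Metric.mem_ball, Subtype.dist_eq, dist_eq_norm]
      simpa using hnv
    exact hball this
  · rintro ⟨hws, δ, hδ, h⟩
    have hwspan : w ∈ affineSpan ℝ s := subset_affineSpan ℝ s hws
    refine mem_intrinsicInterior.2 ⟨⟨w, hwspan⟩, ?_, rfl⟩
    rw [mem_interior_iff_mem_nhds, Metric.mem_nhds_iff]
    refine ⟨δ, hδ, fun z hz => ?_⟩
    have hv : (z : E) - w ∈ (affineSpan ℝ s).direction :=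
      AffineSubspace.vsub_mem_direction z.2 hwspan
    have hnv : ‖(z : E) - w‖ < δ := by
      simpa [Subtype.dist_eq, dist_eq_norm] using hz
    have := h _ hv hnv
    simpa using this

-- variable {E : Type*} [NormedAddCommGroup E] [NormedSpace ℝ E] [FiniteDimensional ℝ E]

lemma sum_pos_comb_mem_intrinsicInterior {s : Set E} (hs : Convex ℝ s)
    {ι : Type*} [Fintype ι] [Nonempty ι] (x : ι → E) (c : ι → ℝ) (hc : ∀ j, 0 < c j)
    (hsum : ∑ j, c j = 1) (hxs : ∀ j, x j ∈ s)
    (hspan : (affineSpan ℝ s).direction ≤ vectorSpan ℝ (Set.range x)) :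
    (∑ j, c j • x j) ∈ intrinsicInterior ℝ s := by
  classical
  set w := ∑ j, c j • x j with hw
  have hws : w ∈ s := hs.sum_mem (fun i _ => (hc i).le) hsum (fun i _ => hxs i)
  let j₀ : ι := Classical.arbitrary ι
  let T : (ι → ℝ) →ₗ[ℝ] E := Fintype.linearCombination ℝ (fun j => x j - x j₀)
  have hTapp : ∀ b : ι → ℝ, T b = ∑ j, b j • (x j - x j₀) := fun b =>
    rfl
  have hrange : vectorSpan ℝ (Set.range x) ≤ LinearMap.range T := by
    rw [vectorSpan_eq_span_vsub_set_right ℝ (Set.mem_range_self j₀)]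
    rw [Submodule.span_le]
    rintro _ ⟨_, ⟨j, rfl⟩, rfl⟩
    refine ⟨Pi.single j 1, ?_⟩
    rw [hTapp]
    simp [Pi.single_apply, Finset.sum_ite_eq']
  obtain ⟨g, hg⟩ := (T.rangeRestrict).exists_rightInverse_of_surjective
    (LinearMap.range_eq_top.2 T.surjective_rangeRestrict)
  have hTg : ∀ u : LinearMap.range T, T (g u) = u := by
    intro u
    have := LinearMap.ext_iff.1 hg u
    simpa [LinearMap.rangeRestrict, Subtype.ext_iff] using this
  set C : ℝ := ‖LinearMap.toContinuousLinearMap g‖ with hC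
  have hC0 : 0 ≤ C := hC ▸ ContinuousLinearMap.opNorm_nonneg _
  have hgb : ∀ u : LinearMap.range T, ‖g u‖ ≤ C * ‖u‖ := fun u =>
    (LinearMap.toContinuousLinearMap g).le_opNorm u
  set m : ℝ := Finset.univ.inf' Finset.univ_nonempty c with hm
  have hm0 : 0 < m := (Finset.lt_inf'_iff _).2 fun j _ => hc j
  have hmle : ∀ j, m ≤ c j := fun j => Finset.inf'_le _ (Finset.mem_univ j)
  set N : ℝ := (Fintype.card ι : ℝ) + 1 with hN
  have hN0 : 0 < N := by positivity
  refine mem_intrinsicInterior_iff'.2 ⟨hws, m / ((C + 1) * N), by positivity, fun v hv hnv => ?_⟩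
  have hvr : v ∈ LinearMap.range T := hrange (hspan hv)
  set b : ι → ℝ := g ⟨v, hvr⟩ with hb
  have hTb : T b = v := hTg ⟨v, hvr⟩
  have hbn : ‖b‖ ≤ C * ‖v‖ := by simpa using hgb ⟨v, hvr⟩
  have hbsmall : (N : ℝ) * ‖b‖ < m := by
    calc N * ‖b‖ ≤ N * (C * ‖v‖) := by nlinarith [norm_nonneg b, norm_nonneg v]
    _ ≤ N * ((C + 1) * ‖v‖) := by nlinarith [norm_nonneg v]
    _ < N * ((C + 1) * (m / ((C + 1) * N))) := by
        apply mul_lt_mul_of_pos_left _ hN0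
        apply mul_lt_mul_of_pos_left hnv (by positivity)
    _ = m := by field_simp
  have hbj : ∀ j, |b j| ≤ ‖b‖ := fun j => by
    simpa [Real.norm_eq_abs] using norm_le_pi_norm b j
  have hbsum : |∑ i, b i| ≤ (Fintype.card ι : ℝ) * ‖b‖ := by
    calc |∑ i, b i| ≤ ∑ i, |b i| := Finset.abs_sum_le_sum_abs _ _
    _ ≤ ∑ _i : ι, ‖b‖ := Finset.sum_le_sum fun i _ => hbj i
    _ = (Fintype.card ι : ℝ) * ‖b‖ := by simp [Finset.sum_const, nsmul_eq_mul]
  set c' : ι → ℝ := fun j => c j + b j - (if j = j₀ then ∑ i, b i else 0) with hc'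
  have hc'sum : ∑ j, c' j = 1 := by
    simp only [hc', Finset.sum_sub_distrib, Finset.sum_add_distrib]
    rw [Finset.sum_ite_eq' Finset.univ j₀ (fun _ => ∑ i, b i)]
    simp [hsum]
  have hb2 : (Fintype.card ι : ℝ) * ‖b‖ + ‖b‖ < m := by
    have h' := hbsmall; rw [hN, add_mul, one_mul] at h'; exact h'
  have hsumb : ∑ i, b i ≤ (Fintype.card ι : ℝ) * ‖b‖ := (le_abs_self _).trans hbsum
  have hc'pos : ∀ j, 0 ≤ c' j := by
    intro j
    have h3 := (abs_le.1 (hbj j)).1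
    have h4 := hmle j
    simp only [hc']
    split_ifs with h
    · subst h; linarith
    · linarith [mul_nonneg (Nat.cast_nonneg (Fintype.card ι) : (0:ℝ) ≤ _) (norm_nonneg b)]
  have hite : ∑ j, (if j = j₀ then ∑ i, b i else 0) • x j = (∑ i, b i) • x j₀ := by
    rw [Finset.sum_eq_single j₀]
    · simp
    · intro j _ hj; simp [hj]
    · intro h; exact absurd (Finset.mem_univ j₀) h
  have hkey : ∑ j, c' j • x j = w + v := by
    calc ∑ j, c' j • x j
        = ∑ j, (c j • x j + b j • x j - (if j = j₀ then ∑ i, b i else 0) • x j) := by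
          refine Finset.sum_congr rfl fun j _ => ?_
          simp only [hc']; rw [sub_smul, add_smul]
      _ = w + (∑ j, b j • x j - (∑ i, b i) • x j₀) := by
          rw [Finset.sum_sub_distrib, Finset.sum_add_distrib, hite, hw]; abel
      _ = w + v := by
          rw [← hTb, hTapp]
          congr 1
          rw [Finset.sum_congr rfl (fun j _ => smul_sub (b j) (x j) (x j₀)),
            Finset.sum_sub_distrib, ← Finset.sum_smul]
  have : w + v ∈ s := by
    rw [← hkey]
    exact hs.sum_mem (fun i _ => hc'pos i) hc'sum (fun i _ => hxs i)
  exact this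


variable [FiniteDimensional ℝ E]

lemma exists_face_mem_intrinsicInterior {C : Set E} (hC : Convex ℝ C) {w : E} (hw : w ∈ C) :
    ∃ G : Set E, IsFaceOf C G ∧ w ∈ intrinsicInterior ℝ G := by
  classical
  set G : Set E := {z ∈ C | ∃ s : ℝ, 0 < s ∧ w + s • (w - z) ∈ C} with hG
  have hGC : G ⊆ C := fun z hz => hz.1
  have hwG : w ∈ G := ⟨hw, 1, one_pos, by simpa⟩
  -- shrinking the witness
  have key : ∀ (z : E), ∀ s₀ s : ℝ, 0 < s₀ → 0 < s → s ≤ s₀ →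
      w + s₀ • (w - z) ∈ C → w + s • (w - z) ∈ C := by
    intro z s₀ s hs₀ hs hss₀ hmem
    have hs₀' : s₀ ≠ 0 := ne_of_gt hs₀
    have hcomb : w + s • (w - z) = (1 - s/s₀) • w + (s/s₀) • (w + s₀ • (w - z)) := by
      rw [smul_add, smul_smul, sub_smul, one_smul]
      rw [div_mul_cancel₀ _ hs₀']
      abel
    rw [hcomb]
    refine hC hw hmem ?_ ?_ (by ring)
    · rw [sub_nonneg]; exact div_le_one_of_le₀ hss₀ hs₀.le
    · positivity
  have hGconv : Convex ℝ G := by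
    rintro z₁ ⟨hz₁C, s₁, hs₁, h₁⟩ z₂ ⟨hz₂C, s₂, hs₂, h₂⟩ a b ha hb hab
    refine ⟨hC hz₁C hz₂C ha hb hab, min s₁ s₂, lt_min hs₁ hs₂, ?_⟩
    have h₁' := key z₁ s₁ (min s₁ s₂) hs₁ (lt_min hs₁ hs₂) (min_le_left _ _) h₁
    have h₂' := key z₂ s₂ (min s₁ s₂) hs₂ (lt_min hs₁ hs₂) (min_le_right _ _) h₂
    have hcomb : w + (min s₁ s₂) • (w - (a • z₁ + b • z₂)) =
        a • (w + (min s₁ s₂) • (w - z₁)) + b • (w + (min s₁ s₂) • (w - z₂)) := by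
      have hb' : b = 1 - a := by linarith
      subst hb'
      module
    rw [hcomb]
    exact hC h₁' h₂' ha hb hab
  -- main face step
  have main : ∀ x ∈ C, ∀ y ∈ C, ∀ q, q ∈ openSegment ℝ x y → q ∈ G → x ∈ G := by
    intro x hx y hy q hqseg hqG
    obtain ⟨hqC, s, hs, hcs⟩ := hqG
    obtain ⟨t₁, t₂, ht₁, ht₂, hts, hq⟩ := hqseg
    set cpt := w + s • (w - q) with hcpt
    have h1s : (0:ℝ) < 1 + s := by linarith
    set ax := s*t₁/(1+s) with hax
    set ay := s*t₂/(1+s) with hay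
    set ac := 1/(1+s) with hac
    have haxp : 0 < ax := by positivity
    have hayp : 0 < ay := by positivity
    have hacp : 0 < ac := by positivity
    have hsum3 : ax + ay + ac = 1 := by
      rw [hax, hay, hac, ← add_div, ← add_div, div_eq_one_iff_eq h1s.ne']
      linear_combination s * hts
    have hwcomb : w = ax • x + ay • y + ac • cpt := by
      have h1 : (1+s) • w = s • q + cpt := by rw [hcpt]; module
      have h2 : w = (ac * s) • q + ac • cpt := by
        have := congrArg (fun u => ac • u) h1
        simp only [smul_add, smul_smul, hac] at this ⊢
        rw [show (1/(1+s)) * (1+s) = 1 by field_simp] at this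
        simpa using this
      rw [h2, ← hq, smul_add, smul_smul, smul_smul]
      rw [show ac * s * t₁ = ax by rw [hax, hac]; ring,
        show ac * s * t₂ = ay by rw [hay, hac]; ring]
    have hyac : 0 < ay + ac := by positivity
    have hrC : (ay/(ay+ac)) • y + (ac/(ay+ac)) • cpt ∈ C := by
      refine hC hy hcs (by positivity) (by positivity) ?_
      field_simp
    refine ⟨hx, ax/(ay+ac), by positivity, ?_⟩
    have hfin : w + (ax/(ay+ac)) • (w - x) = (ay/(ay+ac)) • y + (ac/(ay+ac)) • cpt := by
      have hws : (ay + ac) • ((ay/(ay+ac)) • y + (ac/(ay+ac)) • cpt) = ay • y + ac • cpt := by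
        rw [smul_add, smul_smul, smul_smul, mul_div_cancel₀ _ (ne_of_gt hyac),
          mul_div_cancel₀ _ (ne_of_gt hyac)]
      have hws2 : ay • y + ac • cpt = w - ax • x := by
        rw [hwcomb]; abel
      have hne : (ay + ac) ≠ 0 := ne_of_gt hyac
      refine smul_right_injective E hne ?_
      show (ay + ac) • (w + (ax / (ay + ac)) • (w - x)) =
        (ay + ac) • ((ay / (ay + ac)) • y + (ac / (ay + ac)) • cpt)
      rw [hws, hws2, smul_add, smul_smul, mul_div_cancel₀ _ hne,
        show ay + ac = 1 - ax from by linarith]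
      module
    rw [hfin]
    exact hrC
  refine ⟨G, ⟨hGC, hGconv, ?_⟩, ?_⟩
  · rintro x hx y hy ⟨q, hqseg, hqG⟩
    have hxG : x ∈ G := main x hx y hy q hqseg hqG
    have hyG : y ∈ G := main y hy x hx q (by rwa [openSegment_symm]) hqG
    exact hGconv.segment_subset hxG hyG
  · -- w is in the intrinsic interior of G
    obtain ⟨t, htG, htspan, htind⟩ := exists_affineIndependent ℝ E G
    have htfin : t.Finite := finite_set_of_fin_dim_affineIndependent ℝ htind
    set t' : Set E := insert w t with ht'
    have ht'fin : t'.Finite := htfin.insert w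
    have ht'G : t' ⊆ G := insert_subset hwG htG
    have ht'span : affineSpan ℝ t' = affineSpan ℝ G := by
      refine le_antisymm (affineSpan_mono ℝ ht'G) ?_
      rw [← htspan]
      exact affineSpan_mono ℝ (subset_insert w t)
    haveI : Fintype ↥t' := ht'fin.fintype
    haveI : Nonempty ↥t' := ⟨⟨w, mem_insert w t⟩⟩
    have hch : ∀ z : ↥t', ∃ s : ℝ, 0 < s ∧ w + s • (w - (z:E)) ∈ C := fun z =>
      (ht'G z.2).2
    choose sf hsf hsfC using hch
    set yf : ↥t' → E := fun z => w + sf z • (w - (z:E)) with hyf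
    have hyfG : ∀ z, yf z ∈ G := by
      intro z
      refine ⟨hsfC z, 1/(sf z), one_div_pos.mpr (hsf z), ?_⟩
      have hzz : w + (1/(sf z)) • (w - yf z) = (z : E) := by
        rw [hyf]
        have hsz : sf z ≠ 0 := ne_of_gt (hsf z)
        match_scalars <;> field_simp <;> ring
      rw [hzz]
      exact hGC (ht'G z.2)
    set card : ℝ := (Fintype.card ↥t' : ℝ) with hcard
    have hcard0 : 0 < card := by
      rw [hcard]
      exact_mod_cast Fintype.card_pos
    have hcardne : card ≠ 0 := ne_of_gt hcard0
    set x : ↥t' ⊕ ↥t' → E := Sum.elim (fun z => (z:E)) yf with hx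
    set c : ↥t' ⊕ ↥t' → ℝ :=
      Sum.elim (fun z => sf z / ((1 + sf z) * card)) (fun z => 1 / ((1 + sf z) * card)) with hc
    have hone : ∀ z : ↥t', (0:ℝ) < 1 + sf z := fun z => by linarith [hsf z]
    have hcpos : ∀ j, 0 < c j := by
      rintro (z | z)
      · exact div_pos (hsf z) (mul_pos (hone z) hcard0)
      · exact div_pos one_pos (mul_pos (hone z) hcard0)
    have hcsum : ∑ j, c j = 1 := by
      rw [Fintype.sum_sum_type]
      simp only [hc, Sum.elim_inl, Sum.elim_inr]
      rw [← Finset.sum_add_distrib]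
      have hper : ∀ z : ↥t', sf z / ((1 + sf z) * card) + 1 / ((1 + sf z) * card) = 1/card := by
        intro z
        have h1 : (1:ℝ) + sf z ≠ 0 := ne_of_gt (hone z)
        rw [← add_div, div_eq_div_iff (mul_pos (hone z) hcard0).ne' hcardne]
        ring
      rw [Finset.sum_congr rfl fun z _ => hper z, Finset.sum_const, Finset.card_univ,
        nsmul_eq_mul, mul_one_div, div_self hcardne]
    have hxG : ∀ j, x j ∈ G := by
      rintro (z | z)
      · exact ht'G z.2
      · exact hyfG z
    have hwsum : w = ∑ j, c j • x j := by
      rw [Fintype.sum_sum_type]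
      simp only [hc, hx, Sum.elim_inl, Sum.elim_inr]
      rw [← Finset.sum_add_distrib]
      have hper : ∀ z : ↥t', (sf z / ((1 + sf z) * card)) • (z:E)
          + (1 / ((1 + sf z) * card)) • yf z = (1/card) • w := by
        intro z
        rw [hyf]
        have h1 : (1:ℝ) + sf z ≠ 0 := ne_of_gt (hone z)
        match_scalars <;> field_simp <;> ring
      rw [Finset.sum_congr rfl fun z _ => hper z, Finset.sum_const, Finset.card_univ]
      rw [← Nat.cast_smul_eq_nsmul ℝ, ← hcard, smul_smul, mul_one_div, div_self hcardne,
        one_smul]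
    rw [hwsum]
    refine sum_pos_comb_mem_intrinsicInterior hGconv x c hcpos hcsum hxG ?_
    have hrange : t' ⊆ Set.range x := fun z hz => ⟨Sum.inl ⟨z, hz⟩, rfl⟩
    have hvs : vectorSpan ℝ G = vectorSpan ℝ t' := by
      rw [← direction_affineSpan, ← direction_affineSpan, ht'span]
    rw [direction_affineSpan, hvs]
    exact vectorSpan_mono ℝ hrange


lemma exists_mem_kSkeleton {C : Set E} (hcomp : IsCompact C)
    (hne : C.Nonempty) (k : ℕ) : ∃ w, w ∈ kSkeleton k C := by
  obtain ⟨w, hw⟩ := hcomp.extremePoints_nonempty hne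
  rw [mem_extremePoints] at hw
  obtain ⟨hwC, hwext⟩ := hw
  refine ⟨w, hwC, {w}, ⟨singleton_subset_iff.2 hwC, convex_singleton w, ?_⟩, ?_, ?_⟩
  · rintro x hx y hy ⟨q, hq, hqw⟩
    rw [mem_singleton_iff] at hqw
    subst hqw
    obtain ⟨hx', hy'⟩ := hwext x hx y hy hq
    subst hx'; subst hy'
    rw [segment_same]
  · rw [intrinsicInterior_singleton]; exact rfl
  · show Module.finrank ℝ (affineSpan ℝ ({w} : Set E)).direction ≤ k
    rw [direction_affineSpan, vectorSpan_singleton]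
    simp

end Helpers

section Gauge

variable {E : Type*} [NormedAddCommGroup E] [NormedSpace ℝ E] [FiniteDimensional ℝ E]

lemma IsGauge.zero {γ : E → ℝ} (h : IsGauge γ) : γ 0 = 0 := by
  have := h.2.2.1 0 0 le_rfl
  simpa using this

lemma IsGauge.convexOn {γ : E → ℝ} (h : IsGauge γ) : ConvexOn ℝ Set.univ γ := by
  refine ⟨convex_univ, fun x _ y _ a b ha hb hab => ?_⟩
  calc γ (a • x + b • y) ≤ γ (a • x) + γ (b • y) := h.2.2.2 _ _
  _ = a * γ x + b * γ y := by rw [h.2.2.1 a x ha, h.2.2.1 b y hb]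

lemma IsGauge.continuous {γ : E → ℝ} (h : IsGauge γ) : Continuous γ := by
  rw [← continuousOn_univ]
  exact h.convexOn.continuousOn isOpen_univ

lemma IsGauge.exists_lower [Nontrivial E] {γ : E → ℝ} (h : IsGauge γ) :
    ∃ c : ℝ, 0 < c ∧ ∀ x, c * ‖x‖ ≤ γ x := by
  have hsne : (Metric.sphere (0:E) 1).Nonempty :=
    NormedSpace.sphere_nonempty.2 zero_le_one
  obtain ⟨z, hz, hzmin⟩ := (isCompact_sphere (0:E) 1).exists_isMinOn hsne
    h.continuous.continuousOn
  have hz1 : ‖z‖ = 1 := by simpa [mem_sphere_iff_norm] using hz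
  have hzpos : 0 < γ z := by
    rcases lt_or_eq_of_le (h.1 z) with h' | h'
    · exact h'
    · exfalso
      have := h.2.1 z h'.symm
      rw [this] at hz1
      simp at hz1
  refine ⟨γ z, hzpos, fun x => ?_⟩
  rcases eq_or_ne x 0 with rfl | hx
  · simp [h.zero]
  · have hnx : (0:ℝ) < ‖x‖ := norm_pos_iff.2 hx
    have hmem : (‖x‖⁻¹ • x) ∈ Metric.sphere (0:E) 1 := by
      simp [norm_smul, abs_of_pos (inv_pos.2 hnx), inv_mul_cancel₀ hnx.ne']
    have h3 : γ z ≤ γ (‖x‖⁻¹ • x) := hzmin hmem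
    have h2 : γ (‖x‖⁻¹ • x) = ‖x‖⁻¹ * γ x := h.2.2.1 _ _ (inv_pos.2 hnx).le
    rw [h2] at h3
    have h4 := mul_le_mul_of_nonneg_left h3 hnx.le
    rw [← mul_assoc, mul_inv_cancel₀ hnx.ne', one_mul] at h4
    linarith [h4]

end Gauge

notation "⟪" x ", " y "⟫ℝ" => @inner ℝ _ _ x y

section Loc

variable {X : Type*} [NormedAddCommGroup X] [InnerProductSpace ℝ X] [FiniteDimensional ℝ X]

lemma gauge_locally_linear {γ : X → ℝ} (hγ : IsGauge γ) {G : Set X}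
    (hGB : ∀ z ∈ G, γ (-z) ≤ 1) {w : X} (hw1 : γ (-w) = 1) {δ : ℝ} (hδ : 0 < δ)
    (hball : ∀ v ∈ (affineSpan ℝ G).direction, ‖v‖ < δ → w + v ∈ G)
    {n₀ : X} (hker : ∀ y : X, ⟪n₀, y⟫ℝ = 0 → y ∈ (affineSpan ℝ G).direction)
    (hc : ⟪n₀, w⟫ℝ ≠ 0) {l : ℝ} (hl : 0 < l) :
    ∃ ε > 0, ∀ y : X, ‖y - l • (-w)‖ < ε → γ y = ⟪-(⟪n₀, w⟫ℝ)⁻¹ • n₀, y⟫ℝ := by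
  set c : ℝ := ⟪n₀, w⟫ℝ with hcdef
  set K₁ : ℝ := ‖n₀‖/|c| + 1 with hK₁def
  set K₂ : ℝ := 1 + K₁ * ‖w‖ with hK₂def
  have hcabs : 0 < |c| := abs_pos.2 hc
  have hK₁ : 0 < K₁ := by positivity
  have hK₂ : 0 < K₂ := by positivity
  refine ⟨min ((l/2)/K₁) ((δ*l/4)/K₂), by positivity, fun y hy => ?_⟩
  set y₀ : X := l • (-w) with hy₀def
  set s : ℝ := ⟪n₀, y⟫ℝ / c with hsdef
  set u : X := y - s • w with hudef
  have hinneru : ⟪n₀, u⟫ℝ = 0 := by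
    rw [hudef, inner_sub_right, real_inner_smul_right, hsdef, div_mul_cancel₀ _ hc]
    ring
  have huV : u ∈ (affineSpan ℝ G).direction := hker u hinneru
  have hsdiff : |s + l| ≤ K₁ * ‖y - y₀‖ := by
    have h1 : s + l = ⟪n₀, y - y₀⟫ℝ / c := by
      rw [inner_sub_right, hy₀def, real_inner_smul_right, inner_neg_right, hsdef]
      field_simp
      rw [hcdef]; ring
    rw [h1, abs_div]
    calc |⟪n₀, y - y₀⟫ℝ| / |c| ≤ (‖n₀‖ * ‖y - y₀‖) / |c| := by
          gcongr
          exact abs_real_inner_le_norm _ _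
      _ = (‖n₀‖/|c|) * ‖y - y₀‖ := by ring
      _ ≤ K₁ * ‖y - y₀‖ := by
          rw [hK₁def]
          nlinarith [norm_nonneg (y - y₀)]
  have hy1 : ‖y - y₀‖ < (l/2)/K₁ := lt_of_lt_of_le hy (min_le_left _ _)
  have hy2 : ‖y - y₀‖ < (δ*l/4)/K₂ := lt_of_lt_of_le hy (min_le_right _ _)
  have hsl : |s + l| < l/2 := by
    calc |s + l| ≤ K₁ * ‖y - y₀‖ := hsdiff
      _ < K₁ * ((l/2)/K₁) := by exact mul_lt_mul_of_pos_left hy1 hK₁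
      _ = l/2 := by field_simp
  have hsneg : s < -(l/2) := by
    have := (abs_lt.1 hsl).2
    linarith
  have hsne : s ≠ 0 := by
    intro h; rw [h] at hsneg; linarith
  have hsabs : l/2 < |s| := by
    rw [abs_of_neg (by linarith : s < 0)]
    linarith
  have hueq : u = (y - y₀) - (s + l) • w := by
    rw [hudef, hy₀def]
    module
  have hunorm : ‖u‖ ≤ K₂ * ‖y - y₀‖ := by
    rw [hueq]
    calc ‖(y - y₀) - (s + l) • w‖ ≤ ‖y - y₀‖ + ‖(s + l) • w‖ := norm_sub_le _ _
      _ = ‖y - y₀‖ + |s + l| * ‖w‖ := by rw [norm_smul, Real.norm_eq_abs]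
      _ ≤ ‖y - y₀‖ + (K₁ * ‖y - y₀‖) * ‖w‖ := by
          nlinarith [norm_nonneg w, hsdiff]
      _ = K₂ * ‖y - y₀‖ := by rw [hK₂def]; ring
  have hunorm2 : ‖u‖ < δ*l/4 := by
    calc ‖u‖ ≤ K₂ * ‖y - y₀‖ := hunorm
      _ < K₂ * ((δ*l/4)/K₂) := mul_lt_mul_of_pos_left hy2 hK₂
      _ = δ*l/4 := by field_simp
  set v : X := s⁻¹ • u with hvdef
  have hvV : v ∈ (affineSpan ℝ G).direction := Submodule.smul_mem _ _ huV
  have hvnorm : ‖v‖ < δ := by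
    rw [hvdef, norm_smul, Real.norm_eq_abs, abs_inv]
    have h1 : |s|⁻¹ < 2/l := by
      rw [inv_lt_iff_one_lt_mul₀ (by linarith : 0 < |s|)]
      calc (1:ℝ) = (2/l) * (l/2) := by field_simp
        _ < (2/l) * |s| := by
            apply mul_lt_mul_of_pos_left hsabs (by positivity)
        _ = 2/l * |s| := rfl
    calc |s|⁻¹ * ‖u‖ ≤ |s|⁻¹ * (δ*l/4) := by
          apply mul_le_mul_of_nonneg_left hunorm2.le (by positivity)
      _ ≤ (2/l) * (δ*l/4) := by
          apply mul_le_mul_of_nonneg_right h1.le (by positivity)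
      _ = δ/2 := by field_simp; ring
      _ < δ := by linarith
  have hz1 : γ (-(w+v)) = 1 := by
    have hzG : w + v ∈ G := hball v hvV hvnorm
    have hzG' : w + (-v) ∈ G := by
      refine hball (-v) (Submodule.neg_mem _ hvV) ?_
      rwa [norm_neg]
    have le1 : γ (-(w+v)) ≤ 1 := hGB _ hzG
    have le2 : γ (-(w+(-v))) ≤ 1 := hGB _ hzG'
    have hmid : (-w : X) = (2:ℝ)⁻¹ • (-(w+v)) + (2:ℝ)⁻¹ • (-(w+(-v))) := by
      module
    have hsub : γ (-w) ≤ (2:ℝ)⁻¹ * γ (-(w+v)) + (2:ℝ)⁻¹ * γ (-(w+(-v))) := by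
      rw [hmid]
      calc γ ((2:ℝ)⁻¹ • (-(w+v)) + (2:ℝ)⁻¹ • (-(w+(-v))))
          ≤ γ ((2:ℝ)⁻¹ • (-(w+v))) + γ ((2:ℝ)⁻¹ • (-(w+(-v)))) := hγ.2.2.2 _ _
        _ = (2:ℝ)⁻¹ * γ (-(w+v)) + (2:ℝ)⁻¹ * γ (-(w+(-v))) := by
            rw [hγ.2.2.1 _ _ (by norm_num), hγ.2.2.1 _ _ (by norm_num)]
    rw [hw1] at hsub
    linarith
  have hy_eq : y = (-s) • (-(w + v)) := by
    have hss : s * s⁻¹ = 1 := mul_inv_cancel₀ hsne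
    have : y = s • w + u := by rw [hudef]; abel
    rw [this, hvdef]
    match_scalars <;> field_simp
  have hγy : γ y = -s := by
    rw [hy_eq, hγ.2.2.1 (-s) _ (by linarith), hz1, mul_one]
  rw [hγy, real_inner_smul_left]
  rw [hsdef, hcdef]
  field_simp


end Loc

/-- Every point of the `(d-2)`-skeleton of the sublevel set `{x : ∑ γᵢ(pᵢ - x) ≤ α}` is of
the form `pᵢ + λ • w` with `0 ≤ λ ≤ α` and `w` in the `(d-2)`-skeleton of `-Bᵢ`, where `Bᵢ`
is the unit ball of the gauge `γᵢ`. -/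
theorem skeleton_of_sublevel_set_fermatTorricelli
    {d : ℕ} (hd : 2 ≤ d) {n : ℕ} (hn : 1 ≤ n)
    (p : Fin n → EuclideanSpace ℝ (Fin d))
    (γ : Fin n → EuclideanSpace ℝ (Fin d) → ℝ) (hγ : ∀ i, IsGauge (γ i)) (α : ℝ)
    (x₀ : EuclideanSpace ℝ (Fin d))
    (hx₀ : x₀ ∈ kSkeleton (d - 2) {x : EuclideanSpace ℝ (Fin d) | ∑ i, γ i (p i - x) ≤ α}) :
    ∃ (i : Fin n) (l : ℝ) (w : EuclideanSpace ℝ (Fin d)),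
      l ∈ Set.Icc (0 : ℝ) α ∧
      w ∈ kSkeleton (d - 2) (-{z : EuclideanSpace ℝ (Fin d) | γ i z ≤ 1}) ∧
      x₀ = p i + l • w := by
  classical
  haveI : Nonempty (Fin d) := ⟨⟨0, by omega⟩⟩
  haveI : Nonempty (Fin n) := ⟨⟨0, by omega⟩⟩
  obtain ⟨hx₀K, F, hFface, hx₀F, hdimF⟩ := hx₀
  have hx₀K' : ∑ i, γ i (p i - x₀) ≤ α := hx₀K
  have hterm_nonneg : ∀ i, 0 ≤ γ i (p i - x₀) := fun i => (hγ i).1 _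
  have hα0 : 0 ≤ α := le_trans (Finset.sum_nonneg fun i _ => hterm_nonneg i) hx₀K'
  by_cases hcase : ∃ j, p j = x₀
  · obtain ⟨j, hj⟩ := hcase
    obtain ⟨c, hc, hlow⟩ := (hγ j).exists_lower
    have hBconv : Convex ℝ {z : EuclideanSpace ℝ (Fin d) | γ j z ≤ 1} := by
      have h := (hγ j).convexOn.convex_le 1
      simpa using h
    have hBclosed : IsClosed {z : EuclideanSpace ℝ (Fin d) | γ j z ≤ 1} :=
      isClosed_le (hγ j).continuous continuous_const
    have hBbdd : Bornology.IsBounded {z : EuclideanSpace ℝ (Fin d) | γ j z ≤ 1} := by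
      refine (Metric.isBounded_closedBall (x := (0:EuclideanSpace ℝ (Fin d))) (r := c⁻¹)).subset ?_
      intro z hz
      have h1 : c * ‖z‖ ≤ 1 := le_trans (hlow z) hz
      have h2 : ‖z‖ ≤ c⁻¹ := by
        rw [← one_div, le_div_iff₀ hc]
        linarith [h1]
      simpa [Metric.mem_closedBall, dist_eq_norm] using h2
    have hBcompact : IsCompact {z : EuclideanSpace ℝ (Fin d) | γ j z ≤ 1} :=
      Metric.isCompact_of_isClosed_isBounded hBclosed hBbdd
    have hnegcompact : IsCompact (-{z : EuclideanSpace ℝ (Fin d) | γ j z ≤ 1}) := hBcompact.neg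
    have hnegne : (-{z : EuclideanSpace ℝ (Fin d) | γ j z ≤ 1}).Nonempty := by
      refine ⟨0, ?_⟩
      rw [Set.mem_neg, neg_zero]
      show γ j 0 ≤ 1
      rw [(hγ j).zero]
      norm_num
    obtain ⟨w, hwsk⟩ := exists_mem_kSkeleton hnegcompact hnegne (d-2)
    exact ⟨j, 0, w, ⟨le_rfl, hα0⟩, hwsk, by rw [hj]; simp⟩
  · push_neg at hcase
    set lam : Fin n → ℝ := fun i => γ i (p i - x₀) with hlam
    have hlampos : ∀ i, 0 < lam i := by
      intro i
      rcases lt_or_eq_of_le (hterm_nonneg i) with h | h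
      · exact h
      · exfalso
        have h2 := (hγ i).2.1 _ h.symm
        rw [sub_eq_zero] at h2
        exact hcase i h2
    set wv : Fin n → EuclideanSpace ℝ (Fin d) := fun i => (lam i)⁻¹ • (x₀ - p i) with hwv
    have hlamw : ∀ i, lam i • wv i = x₀ - p i := fun i => by
      show lam i • ((lam i)⁻¹ • (x₀ - p i)) = x₀ - p i
      rw [smul_smul, mul_inv_cancel₀ (hlampos i).ne', one_smul]
    have hwv1 : ∀ i, γ i (-(wv i)) = 1 := by
      intro i
      have h1 : -(wv i) = (lam i)⁻¹ • (p i - x₀) := by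
        show -((lam i)⁻¹ • (x₀ - p i)) = _
        rw [← smul_neg, neg_sub]
      rw [h1, (hγ i).2.2.1 _ _ (inv_nonneg.2 (hlampos i).le), inv_mul_cancel₀ (hlampos i).ne']
    have hwvmem : ∀ i, wv i ∈ -{z : EuclideanSpace ℝ (Fin d) | γ i z ≤ 1} := fun i =>
      Set.mem_neg.2 (le_of_eq (hwv1 i))
    suffices hgood : ∃ i, wv i ∈ kSkeleton (d-2)
        (-{z : EuclideanSpace ℝ (Fin d) | γ i z ≤ 1}) by
      obtain ⟨i, hi⟩ := hgood
      refine ⟨i, lam i, wv i, ⟨(hlampos i).le, ?_⟩, hi, ?_⟩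
      · calc lam i ≤ ∑ k, γ k (p k - x₀) :=
            Finset.single_le_sum (fun k _ => hterm_nonneg k) (Finset.mem_univ i)
          _ ≤ α := hx₀K'
      · rw [hlamw i]; abel
    by_contra hbad
    push_neg at hbad
    have hstep : ∀ i : Fin n, ∃ m : EuclideanSpace ℝ (Fin d), ∃ ε, 0 < ε ∧
        ∀ y, ‖y - (lam i) • (-(wv i))‖ < ε → γ i y = ⟪m, y⟫ℝ := by
      intro i
      have hnegBconv : Convex ℝ (-{z : EuclideanSpace ℝ (Fin d) | γ i z ≤ 1}) := by
        have h := (hγ i).convexOn.convex_le 1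
        exact (by simpa using h : Convex ℝ {z : EuclideanSpace ℝ (Fin d) | γ i z ≤ 1}).neg
      obtain ⟨G, hGface, hGrel⟩ := exists_face_mem_intrinsicInterior hnegBconv (hwvmem i)
      have hGB : ∀ z ∈ G, γ i (-z) ≤ 1 := fun z hz => Set.mem_neg.1 (hGface.1 hz)
      obtain ⟨hwG, δ, hδ, hball⟩ := mem_intrinsicInterior_iff'.1 hGrel
      set V := (affineSpan ℝ G).direction with hV
      have hdimG : d - 1 ≤ Module.finrank ℝ V := by
        by_contra hlt
        push_neg at hlt
        refine hbad i ⟨hwvmem i, G, hGface, hGrel, ?_⟩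
        show Module.finrank ℝ (affineSpan ℝ G).direction ≤ d - 2
        have : Module.finrank ℝ (affineSpan ℝ G).direction = Module.finrank ℝ V := rfl
        omega
      have hwnotV : wv i ∉ V := by
        intro hmem
        have hwne : wv i ≠ 0 := by
          intro h0
          have h1 := hwv1 i
          rw [h0, neg_zero, (hγ i).zero] at h1
          norm_num at h1
        have hnwv : 0 < ‖wv i‖ := norm_pos_iff.2 hwne
        set t : ℝ := δ / (2 * ‖wv i‖) with ht
        have htpos : 0 < t := by positivity
        have hmem2 : wv i + t • wv i ∈ G := by
          refine hball (t • wv i) (Submodule.smul_mem _ _ hmem) ?_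
          rw [norm_smul, Real.norm_eq_abs, abs_of_pos htpos, ht]
          rw [div_mul_eq_mul_div, mul_comm]
          rw [show ‖wv i‖ * δ / (2 * ‖wv i‖) = δ/2 * (‖wv i‖/‖wv i‖) from by ring]
          rw [div_self hnwv.ne', mul_one]
          linarith
        have hle := hGB _ hmem2
        have heq : -(wv i + t • wv i) = (1+t) • (-(wv i)) := by module
        rw [heq, (hγ i).2.2.1 _ _ (by linarith), hwv1 i, mul_one] at hle
        linarith
      have hVne : V ≠ ⊤ := fun h => hwnotV (h ▸ Submodule.mem_top)
      have hVlt : Module.finrank ℝ V < d := by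
        have h1 := Submodule.finrank_lt_finrank_of_lt (lt_top_iff_ne_top.2 hVne)
        rwa [finrank_top, finrank_euclideanSpace_fin] at h1
      have hVo : Vᗮ ≠ ⊥ := by
        intro h
        have h2 := Submodule.finrank_add_finrank_orthogonal V
        rw [h, finrank_bot, finrank_euclideanSpace_fin] at h2
        omega
      obtain ⟨n₀, hn₀V, hn₀⟩ := Submodule.exists_mem_ne_zero_of_ne_bot hVo
      have hVle : V ≤ (ℝ ∙ n₀)ᗮ := by
        intro v hv
        rw [Submodule.mem_orthogonal_singleton_iff_inner_right]
        have := (Submodule.mem_orthogonal _ _).1 hn₀V v hv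
        rwa [real_inner_comm] at this
      have hfro : Module.finrank ℝ ((ℝ ∙ n₀)ᗮ : Submodule ℝ (EuclideanSpace ℝ (Fin d))) = d - 1 := by
        have h1 := Submodule.finrank_add_finrank_orthogonal (ℝ ∙ n₀)
        rw [finrank_span_singleton hn₀, finrank_euclideanSpace_fin] at h1
        omega
      have hVK : V = (ℝ ∙ n₀)ᗮ := Submodule.eq_of_le_of_finrank_le hVle (by omega)
      have hker : ∀ y : EuclideanSpace ℝ (Fin d), ⟪n₀, y⟫ℝ = 0 → y ∈ V := by
        intro y hy
        rw [hVK, Submodule.mem_orthogonal_singleton_iff_inner_right]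
        exact hy
      have hcn : ⟪n₀, wv i⟫ℝ ≠ 0 := fun h0 => hwnotV (hker _ h0)
      obtain ⟨ε, hε, hloc⟩ := gauge_locally_linear (hγ i) hGB (hwv1 i) hδ hball hker hcn
        (hlampos i)
      exact ⟨-(⟪n₀, wv i⟫ℝ)⁻¹ • n₀, ε, hε, hloc⟩
    choose mv εf hεf hfloc using hstep
    have hy₀ : ∀ i, lam i • (-(wv i)) = p i - x₀ := fun i => by
      rw [smul_neg, hlamw i, neg_sub]
    set msum : EuclideanSpace ℝ (Fin d) := ∑ i, mv i with hmsum
    set εmin : ℝ := Finset.univ.inf' Finset.univ_nonempty εf with hεmin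
    have hεminpos : 0 < εmin := (Finset.lt_inf'_iff _).2 fun i _ => hεf i
    have hεminle : ∀ i, εmin ≤ εf i := fun i => Finset.inf'_le _ (Finset.mem_univ i)
    have hKmem : ∀ v : EuclideanSpace ℝ (Fin d), ‖v‖ < εmin → ⟪msum, v⟫ℝ = 0 →
        ∑ i, γ i (p i - (x₀ + v)) ≤ α := by
      intro v hv hodot
      have hterm : ∀ i, γ i (p i - (x₀ + v)) = γ i (p i - x₀) - ⟪mv i, v⟫ℝ := by
        intro i
        have h1 : γ i (p i - (x₀ + v)) = ⟪mv i, p i - (x₀+v)⟫ℝ := by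
          apply hfloc i
          rw [hy₀ i]
          have heq : p i - (x₀ + v) - (p i - x₀) = -v := by abel
          rw [heq, norm_neg]
          exact lt_of_lt_of_le hv (hεminle i)
        have h2 : γ i (p i - x₀) = ⟪mv i, p i - x₀⟫ℝ := by
          apply hfloc i
          rw [hy₀ i]
          have heq : p i - x₀ - (p i - x₀) = (0 : EuclideanSpace ℝ (Fin d)) := by abel
          rw [heq, norm_zero]
          exact lt_of_lt_of_le hεminpos (hεminle i)
        rw [h1, h2, show p i - (x₀ + v) = (p i - x₀) - v from by abel, inner_sub_right]
      rw [Finset.sum_congr rfl fun i _ => hterm i, Finset.sum_sub_distrib]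
      have h3 : ∑ i, ⟪mv i, v⟫ℝ = ⟪msum, v⟫ℝ := by
        rw [hmsum, sum_inner]
      rw [h3, hodot, sub_zero]
      exact hx₀K'
    set W : Submodule ℝ (EuclideanSpace ℝ (Fin d)) := (ℝ ∙ msum)ᗮ with hW
    have hWrank : d - 1 ≤ Module.finrank ℝ W := by
      have h1 := Submodule.finrank_add_finrank_orthogonal (ℝ ∙ msum)
      have h2 : Module.finrank ℝ (ℝ ∙ msum : Submodule ℝ (EuclideanSpace ℝ (Fin d))) ≤ 1 := by
        rcases eq_or_ne msum 0 with h | h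
        · rw [h, Submodule.span_zero_singleton, finrank_bot]
          norm_num
        · rw [finrank_span_singleton h]
      rw [finrank_euclideanSpace_fin] at h1
      have hfc : Module.finrank ℝ W =
          Module.finrank ℝ ((ℝ ∙ msum)ᗮ : Submodule ℝ (EuclideanSpace ℝ (Fin d))) := rfl
      omega
    have hWF : ∀ v ∈ W, ‖v‖ < εmin → x₀ + v ∈ F := by
      intro v hvW hvn
      have hv0 : ⟪msum, v⟫ℝ = 0 :=
        Submodule.mem_orthogonal_singleton_iff_inner_right.1 hvW
      rcases eq_or_ne v 0 with rfl | hvne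
      · simpa using intrinsicInterior_subset hx₀F
      · have hminus : ⟪msum, -v⟫ℝ = 0 := by rw [inner_neg_right, hv0, neg_zero]
        have hmem1 : x₀ + v ∈ {x : EuclideanSpace ℝ (Fin d) | ∑ i, γ i (p i - x) ≤ α} :=
          hKmem v hvn hv0
        have hmem2 : x₀ + (-v) ∈ {x : EuclideanSpace ℝ (Fin d) | ∑ i, γ i (p i - x) ≤ α} :=
          hKmem (-v) (by rwa [norm_neg]) hminus
        have hopen : x₀ ∈ openSegment ℝ (x₀ + v) (x₀ + (-v)) := by
          refine ⟨1/2, 1/2, by norm_num, by norm_num, by norm_num, ?_⟩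
          module
        have hseg := hFface.2.2 _ hmem1 _ hmem2 ⟨x₀, hopen, intrinsicInterior_subset hx₀F⟩
        exact hseg (left_mem_segment ℝ _ _)
    have hWdir : W ≤ (affineSpan ℝ F).direction := by
      intro v hvW
      rcases eq_or_ne v 0 with rfl | hvne
      · exact Submodule.zero_mem _
      · have hnv : 0 < ‖v‖ := norm_pos_iff.2 hvne
        set v' : EuclideanSpace ℝ (Fin d) := (εmin / (2 * ‖v‖)) • v with hv'
        have hnv' : ‖v'‖ < εmin := by
          rw [hv', norm_smul, Real.norm_eq_abs, abs_of_pos (by positivity)]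
          rw [show εmin / (2 * ‖v‖) * ‖v‖ = εmin/2 * (‖v‖/‖v‖) from by ring]
          rw [div_self hnv.ne', mul_one]
          linarith
        have hv'W : v' ∈ W := Submodule.smul_mem _ _ hvW
        have h1 : x₀ + v' ∈ F := hWF v' hv'W hnv'
        have h0 : x₀ ∈ F := intrinsicInterior_subset hx₀F
        have hdmem : v' ∈ (affineSpan ℝ F).direction := by
          have h2 := AffineSubspace.vsub_mem_direction (subset_affineSpan ℝ F h1)
            (subset_affineSpan ℝ F h0)
          simpa using h2
        have hveq : v = (2 * ‖v‖ / εmin) • v' := by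
          rw [hv', smul_smul,
            show (2*‖v‖/εmin) * (εmin/(2*‖v‖)) = 1 from by field_simp, one_smul]
        rw [hveq]
        exact Submodule.smul_mem _ _ hdmem
    have hfinal : d - 1 ≤ Module.finrank ℝ (affineSpan ℝ F).direction :=
      le_trans hWrank (Submodule.finrank_mono hWdir)
    have hdimF' : Module.finrank ℝ (affineSpan ℝ F).direction ≤ d - 2 := hdimF
    have hbridge : Module.finrank ℝ W =
        Module.finrank ℝ ((Submodule.span ℝ {msum})ᗮ : Submodule ℝ (EuclideanSpace ℝ (Fin d))) :=
      rfl
    omega
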